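/- arXiv:2406.06794 — 2 statements merged into one kernel-verified Lean document; each statement's English description precedes it below -/
import Mathlib

section
/- Spherical shell covering by band-graph boundaries in ℤ^d (Lemma 5.1): Fix integers d ≥ 1 and W ≥ 1, and for ξ ∈ ℤ^d and real s ≥ 0 let B^d(ξ,s) = { x ∈ ℤ^d : ‖x−ξ‖₂ ≤ s } and ∂B^d(ξ,s) = { x ∈ ℤ^d : ‖x−ξ‖₂ > s and there exists y with ‖y−ξ‖₂ ≤ s and 0 < ‖x−y‖₂ ≤ W }. Set k* = ⌊2√d/W⌋, a_k = 1 − k·W/(2√d) for k = 0,…,k*−1, and a_{k*} = 0. Then there exists ρ₀ = ρ₀(d,W) > 0 such that for every real ρ ≥ ρ₀: if W < 2√d then B^d(ξ,ρ+1) ∖ B^d(ξ,ρ) ⊆ ⋃_{k=1}^{k*} ∂B^d(ξ, ρ+a_k), and if W ≥ 2√d then B^d(ξ,ρ+1) ∖ B^d(ξ,ρ) ⊆ ∂B^d(ξ,ρ). -/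
open scoped BigOperators

namespace BandShell

/-- Euclidean norm of a lattice vector in `ℤ^d`. -/
noncomputable def enorm {d : ℕ} (x : Fin d → ℤ) : ℝ :=
  Real.sqrt (∑ i, ((x i : ℝ)) ^ 2)

/-- Euclidean ball of radius `s` around `ξ` in `ℤ^d`. -/
def eball {d : ℕ} (ξ : Fin d → ℤ) (s : ℝ) : Set (Fin d → ℤ) :=
  {x | enorm (x - ξ) ≤ s}

/-- Exterior boundary of the Euclidean ball of radius `s` with respect to the band-graph
adjacency (`x ∼ y` iff `0 < ‖x-y‖₂ ≤ W`). -/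
def ebdry {d : ℕ} (W : ℕ) (ξ : Fin d → ℤ) (s : ℝ) : Set (Fin d → ℤ) :=
  {x | s < enorm (x - ξ) ∧
    ∃ y : Fin d → ℤ, enorm (y - ξ) ≤ s ∧ 0 < enorm (x - y) ∧ enorm (x - y) ≤ (W : ℝ)}

/-- `k* = ⌊2√d / W⌋`. -/
noncomputable def kstar (d W : ℕ) : ℕ := ⌊2 * Real.sqrt d / W⌋₊

/-- The radii increments `a_k`: `a_k = 1 - kW/(2√d)` for `k < k*`, and `a_{k*} = 0`. -/
noncomputable def aCoef (d W : ℕ) (k : ℕ) : ℝ :=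
  if k = kstar d W then 0 else 1 - k * W / (2 * Real.sqrt d)

variable {d : ℕ}

noncomputable def toE (x : Fin d → ℤ) : EuclideanSpace ℝ (Fin d) := WithLp.toLp 2 (fun i => (x i : ℝ))

lemma toE_sub (x y : Fin d → ℤ) : toE (x - y) = toE x - toE y := by
  ext i
  simp [toE, PiLp.sub_apply]

lemma enorm_eq (x : Fin d → ℤ) : enorm x = ‖toE x‖ := by
  rw [EuclideanSpace.norm_eq]
  simp [enorm, toE]

lemma enorm_nonneg (x : Fin d → ℤ) : 0 ≤ enorm x := Real.sqrt_nonneg _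

lemma enorm_sq (x : Fin d → ℤ) : (enorm x)^2 = ∑ i, ((x i : ℝ))^2 := by
  rw [enorm, Real.sq_sqrt (by positivity)]

lemma enorm_sq_int (x : Fin d → ℤ) : (enorm x)^2 = ((∑ i, (x i)^2 : ℤ) : ℝ) := by
  rw [enorm_sq]; push_cast; rfl

lemma enorm_zero : enorm (0 : Fin d → ℤ) = 0 := by simp [enorm]

lemma enorm_pos_of_ne {x y : Fin d → ℤ} (h : x ≠ y) : 0 < enorm (x - y) := by
  rw [enorm_eq, toE_sub]
  rw [norm_pos_iff, sub_ne_zero]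
  intro hxy
  apply h
  funext i
  have h2 : ((x i : ℝ)) = ((y i : ℝ)) := by simpa [toE] using congrArg (fun v => v i) hxy
  exact_mod_cast h2

lemma enorm_triangle (x y z : Fin d → ℤ) :
    enorm (x - z) ≤ enorm (x - y) + enorm (y - z) := by
  rw [enorm_eq, enorm_eq, enorm_eq, toE_sub, toE_sub, toE_sub]
  have := dist_triangle (toE x) (toE y) (toE z)
  simpa [dist_eq_norm] using this


lemma int_sign_sq {a : ℤ} (h : a ≠ 0) : (Int.sign a)^2 = 1 := by
  rcases lt_trichotomy a 0 with h'|h'|h'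
  · rw [Int.sign_eq_neg_one_of_neg h']; ring
  · exact absurd h' h
  · rw [Int.sign_eq_one_of_pos h']; ring

lemma int_sub_sign_sq {a : ℤ} (h : a ≠ 0) : (a - Int.sign a)^2 = a^2 - 2*|a| + 1 := by
  rcases lt_trichotomy a 0 with h'|h'|h'
  · rw [Int.sign_eq_neg_one_of_neg h', abs_of_neg h']; ring
  · exact absurd h' h
  · rw [Int.sign_eq_one_of_pos h', abs_of_pos h']; ring


lemma step_sq (hd : 1 ≤ d) (x ξ : Fin d → ℤ) (hx : x ≠ ξ) :
    ∃ y : Fin d → ℤ, enorm (x - y) ≤ 1 ∧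
      (enorm (y - ξ))^2 ≤ (enorm (x - ξ))^2 - 2 * enorm (x - ξ) / Real.sqrt d + 1 := by
  have hne : Nonempty (Fin d) := ⟨⟨0, hd⟩⟩
  obtain ⟨i, hi⟩ := Finite.exists_max (fun j => |x j - ξ j|)
  set a : ℤ := x i - ξ i with ha_def
  have hexj : ∃ j, x j ≠ ξ j := by
    by_contra hc; push_neg at hc; exact hx (funext hc)
  obtain ⟨j, hj⟩ := hexj
  have ha0 : a ≠ 0 := by
    intro h0
    have h1 : (1:ℤ) ≤ |x j - ξ j| := Int.one_le_abs (sub_ne_zero.mpr hj)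
    have h2 := hi j
    rw [h0] at h2
    simp at h2
    omega
  set y : Fin d → ℤ := Function.update x i (x i - Int.sign a) with hy_def
  have hxy : ∀ j, (x - y) j = if j = i then Int.sign a else 0 := by
    intro j
    by_cases h : j = i
    · subst h; simp [hy_def, Pi.sub_apply]
    · simp [hy_def, Pi.sub_apply, Function.update_of_ne h, h]
  have hyξ : ∀ j, (y - ξ) j = if j = i then a - Int.sign a else (x - ξ) j := by
    intro j
    by_cases h : j = i
    · subst h; simp [hy_def, Pi.sub_apply, ha_def]; ring
    · simp [hy_def, Pi.sub_apply, Function.update_of_ne h, h]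
  refine ⟨y, ?_, ?_⟩
  · -- enorm (x - y) ≤ 1
    have h1 : (enorm (x - y))^2 = ((∑ j, ((x - y) j)^2 : ℤ) : ℝ) := enorm_sq_int _
    have h2 : (∑ j, ((x - y) j)^2 : ℤ) = 1 := by
      have : ∀ j, ((x - y) j)^2 = if j = i then 1 else 0 := by
        intro j; rw [hxy j]
        by_cases h : j = i <;> simp [h, int_sign_sq ha0]
      rw [Finset.sum_congr rfl fun j _ => this j]
      simp
    rw [h2] at h1
    have h3 : (enorm (x-y))^2 ≤ 1^2 := by rw [h1]; norm_num
    have := enorm_nonneg (x - y)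
    nlinarith
  · -- squared norm decrease
    have e1 : (∑ j, ((y - ξ) j)^2 : ℤ) = (∑ j, ((x - ξ) j)^2) - 2*|a| + 1 := by
      have s1 : (∑ j, ((y - ξ) j)^2 : ℤ)
          = (a - Int.sign a)^2 + ∑ j ∈ Finset.univ.erase i, ((x - ξ) j)^2 := by
        rw [← Finset.add_sum_erase Finset.univ (fun j => ((y - ξ) j)^2) (Finset.mem_univ i)]
        congr 1
        · rw [hyξ i]; simp
        · refine Finset.sum_congr rfl fun j hj => ?_
          rw [hyξ j, if_neg (Finset.ne_of_mem_erase hj)]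
      have s2 : (∑ j, ((x - ξ) j)^2 : ℤ)
          = a^2 + ∑ j ∈ Finset.univ.erase i, ((x - ξ) j)^2 := by
        rw [← Finset.add_sum_erase Finset.univ (fun j => ((x - ξ) j)^2) (Finset.mem_univ i)]
        rfl
      rw [s1, s2, int_sub_sign_sq ha0]
      ring
    have e2 : (enorm (y - ξ))^2 = (enorm (x - ξ))^2 - 2*(|a|:ℝ) + 1 := by
      rw [enorm_sq_int, enorm_sq_int, e1]
      push_cast
      ring
    -- enorm (x - ξ) ≤ sqrt d * |a|
    have hbound : enorm (x - ξ) ≤ Real.sqrt d * (|a| : ℝ) := by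
      have hsum : (∑ j, ((x - ξ) j)^2 : ℤ) ≤ d * |a|^2 := by
        calc (∑ j, ((x - ξ) j)^2 : ℤ) ≤ ∑ _j : Fin d, |a|^2 := by
              refine Finset.sum_le_sum fun j _ => ?_
              have h1 : |(x - ξ) j| ≤ |a| := by
                have := hi j; simpa [Pi.sub_apply] using this
              have h2 : ((x - ξ) j)^2 = |(x - ξ) j|^2 := (sq_abs _).symm
              rw [h2]
              exact pow_le_pow_left₀ (abs_nonneg _) h1 2
          _ = d * |a|^2 := by simp [mul_comm]
      have hsq : (enorm (x - ξ))^2 ≤ (Real.sqrt d * (|a|:ℝ))^2 := by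
        rw [enorm_sq_int, mul_pow, Real.sq_sqrt (by positivity : (0:ℝ) ≤ (d:ℝ))]
        calc ((∑ j, ((x - ξ) j)^2 : ℤ) : ℝ) ≤ ((d * |a|^2 : ℤ) : ℝ) := by exact_mod_cast hsum
          _ = (d:ℝ) * (|a|:ℝ)^2 := by push_cast; ring
      have h0 : 0 ≤ Real.sqrt d * (|a|:ℝ) := by positivity
      nlinarith [enorm_nonneg (x - ξ)]
    have hsd : (0:ℝ) < Real.sqrt d := Real.sqrt_pos.mpr (by exact_mod_cast Nat.pos_of_ne_zero (by omega))
    have hdiv : enorm (x - ξ) / Real.sqrt d ≤ (|a|:ℝ) := by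
      rw [div_le_iff₀ hsd]
      calc enorm (x - ξ) ≤ Real.sqrt d * (|a|:ℝ) := hbound
        _ = (|a|:ℝ) * Real.sqrt d := mul_comm _ _
    have : 2 * enorm (x - ξ) / Real.sqrt d ≤ 2 * (|a|:ℝ) := by
      rw [mul_div_assoc]
      linarith
    linarith [e2.le, e2.ge]

lemma iterate_steps (hd : 1 ≤ d) (R : ℝ) (hR : Real.sqrt d ≤ R) (ξ : Fin d → ℤ) :
    ∀ n : ℕ, ∀ x : Fin d → ℤ, R + n ≤ enorm (x - ξ) →
    ∃ y : Fin d → ℤ, enorm (x - y) ≤ (n:ℝ) ∧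
      enorm (y - ξ) ≤ enorm (x - ξ) - n * (1/Real.sqrt d - 1/(2*R)) := by
  obtain ⟨s, hs_def⟩ : ∃ s:ℝ, s = Real.sqrt d := ⟨_, rfl⟩
  rw [← hs_def] at hR ⊢
  have hs1 : (1:ℝ) ≤ s := by
    rw [hs_def, show (1:ℝ) = Real.sqrt 1 by simp]
    exact Real.sqrt_le_sqrt (by exact_mod_cast hd)
  have hs0 : (0:ℝ) < s := lt_of_lt_of_le one_pos hs1
  have hR1 : (1:ℝ) ≤ R := le_trans hs1 hR
  have hR0 : (0:ℝ) < R := lt_of_lt_of_le one_pos hR1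
  intro n
  induction n with
  | zero =>
    intro x _
    refine ⟨x, ?_, ?_⟩
    · rw [sub_self, enorm_zero]; norm_num
    · push_cast; linarith
  | succ n ih =>
    intro x hx
    obtain ⟨r, hr_def⟩ : ∃ r:ℝ, r = enorm (x - ξ) := ⟨_, rfl⟩
    rw [← hr_def] at hx ⊢
    have hxr : R + ((n:ℝ)+1) ≤ r := by push_cast at hx ⊢; linarith
    have hn0 : (0:ℝ) ≤ (n:ℝ) := Nat.cast_nonneg n
    have hr_pos : (0:ℝ) < r := by linarith
    have hrs : s ≤ r := by linarith
    have hr1 : (1:ℝ) ≤ r := le_trans hs1 hrs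
    have hxξ : x ≠ ξ := by
      intro h; subst h
      rw [sub_self, enorm_zero] at hr_def
      subst hr_def
      exact lt_irrefl _ hr_pos
    obtain ⟨y₁, hy1, hy2⟩ := step_sq hd x ξ hxξ
    rw [← hr_def, ← hs_def] at hy2
    obtain ⟨a, ha_def⟩ : ∃ a:ℝ, a = 1/s - 1/(2*r) := ⟨_, rfl⟩
    have ha_le : a ≤ 1 := by
      have h1 : 1/s ≤ 1 := by rw [div_le_one hs0]; exact hs1
      have h2 : (0:ℝ) < 1/(2*r) := by positivity
      linarith
    have hra : 0 ≤ r - a := by linarith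
    have hkey : (r - a)^2 = r^2 - 2*r/s + 1 + a^2 := by
      subst ha_def
      field_simp
      ring
    have h3 : (enorm (y₁ - ξ))^2 ≤ (r - a)^2 := by
      rw [hkey]
      nlinarith [hy2, sq_nonneg a]
    have h4 : enorm (y₁ - ξ) ≤ r - a := by
      nlinarith [enorm_nonneg (y₁ - ξ), hra, h3]
    have hRr : R ≤ r := by linarith
    have hinv : 1/(2*r) ≤ 1/(2*R) := by
      apply one_div_le_one_div_of_le (by positivity) (by linarith)
    have h5 : enorm (y₁ - ξ) ≤ r - (1/s - 1/(2*R)) := by linarith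
    have hlow : r - 1 ≤ enorm (y₁ - ξ) := by
      have ht := enorm_triangle x y₁ ξ
      rw [← hr_def] at ht
      linarith
    have hy1R : R + (n:ℝ) ≤ enorm (y₁ - ξ) := by linarith
    obtain ⟨y, hz1, hz2⟩ := ih y₁ (by exact_mod_cast hy1R)
    refine ⟨y, ?_, ?_⟩
    · have ht := enorm_triangle x y₁ y
      push_cast
      linarith
    · push_cast
      linarith [hz2]

/-- **Spherical shell covering by band-graph boundaries in `ℤ^d`** (Lemma 5.1).  There is
`ρ₀ = ρ₀(d,W) > 0` such that for every `ρ ≥ ρ₀` and every center `ξ`: if `W < 2√d`, the shell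
`B^d(ξ,ρ+1) ∖ B^d(ξ,ρ)` is covered by the exterior boundaries `∂B^d(ξ,ρ+a_k)`, `1 ≤ k ≤ k*`;
and if `W ≥ 2√d`, the shell is contained in `∂B^d(ξ,ρ)`. -/
theorem shell_covering (d W : ℕ) (hd : 1 ≤ d) (hW : 1 ≤ W) :
    ∃ ρ₀ : ℝ, 0 < ρ₀ ∧ ∀ ρ : ℝ, ρ₀ ≤ ρ → ∀ ξ : Fin d → ℤ,
      (((W : ℝ) < 2 * Real.sqrt d →
          ∀ x ∈ eball ξ (ρ + 1) \ eball ξ ρ,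
            ∃ k : ℕ, 1 ≤ k ∧ k ≤ kstar d W ∧ x ∈ ebdry W ξ (ρ + aCoef d W k)) ∧
        (2 * Real.sqrt d ≤ (W : ℝ) →
          eball ξ (ρ + 1) \ eball ξ ρ ⊆ ebdry W ξ ρ)) := by
  obtain ⟨s, hs_def⟩ : ∃ s:ℝ, s = Real.sqrt d := ⟨_, rfl⟩
  have hs1 : (1:ℝ) ≤ s := by
    rw [hs_def, show (1:ℝ) = Real.sqrt 1 by simp]
    exact Real.sqrt_le_sqrt (by exact_mod_cast hd)
  have hs0 : (0:ℝ) < s := lt_of_lt_of_le one_pos hs1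
  have hW0 : (0:ℝ) < (W:ℝ) := by exact_mod_cast hW
  obtain ⟨K, hK_def⟩ : ∃ K:ℕ, K = kstar d W := ⟨_, rfl⟩
  have hfloor_lt : 2 * s / W < (K:ℝ) + 1 := by
    rw [hK_def, hs_def, kstar]
    exact Nat.lt_floor_add_one _
  have hfloor_le : (K:ℝ) ≤ 2 * s / W := by
    rw [hK_def, hs_def, kstar]
    exact Nat.floor_le (by positivity)
  have hKW : (K:ℝ) * W ≤ 2 * s := by
    rw [← le_div_iff₀ hW0]
    exact hfloor_le
  have hKW' : 2 * s < ((K:ℝ) + 1) * W := by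
    rw [div_lt_iff₀ hW0] at hfloor_lt
    exact hfloor_lt
  obtain ⟨γ, hγ_def⟩ : ∃ γ:ℝ, γ = ((K:ℝ)+1) * W / (2*s) - 1 := ⟨_, rfl⟩
  have hγ0 : 0 < γ := by
    rw [hγ_def, lt_sub_iff_add_lt, zero_add, lt_div_iff₀ (by positivity)]
    linarith
  refine ⟨(W:ℝ) + s + W/(2*γ) + W/2 + 1, by positivity, ?_⟩
  intro ρ hρ ξ
  obtain ⟨R, hR_def⟩ : ∃ R:ℝ, R = s + W/(2*γ) + W/2 + 1 := ⟨_, rfl⟩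
  have hRs : s ≤ R := by
    rw [hR_def]
    have : (0:ℝ) ≤ W/(2*γ) := by positivity
    linarith
  have hR0 : (0:ℝ) < R := lt_of_lt_of_le (lt_of_lt_of_le one_pos hs1) hRs
  have hRW : (W:ℝ) ≤ 2*R := by
    rw [hR_def]
    have : (0:ℝ) ≤ W/(2*γ) := by positivity
    linarith
  have hRγ : (W:ℝ)/(2*R) ≤ γ := by
    rw [div_le_iff₀ (by positivity)]
    have h1 : (W:ℝ)/(2*γ) ≤ R := by
      rw [hR_def]; linarith
    rw [div_le_iff₀ (by positivity)] at h1
    linarith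
  obtain ⟨c, hc_def⟩ : ∃ c:ℝ, c = 1/s - 1/(2*R) := ⟨_, rfl⟩
  -- common construction
  have main : ∀ x : Fin d → ℤ, x ∈ eball ξ (ρ + 1) \ eball ξ ρ →
      ρ < enorm (x - ξ) ∧ enorm (x - ξ) ≤ ρ + 1 ∧
      ∃ y : Fin d → ℤ, enorm (x - y) ≤ (W:ℝ) ∧
        enorm (y - ξ) ≤ enorm (x - ξ) - W * c := by
    intro x hx
    obtain ⟨hx1, hx2⟩ := hx
    have hx1' : enorm (x - ξ) ≤ ρ + 1 := hx1
    have hx2' : ρ < enorm (x - ξ) := lt_of_not_ge hx2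
    refine ⟨hx2', hx1', ?_⟩
    have hcond : R + (W:ℝ) ≤ enorm (x - ξ) := by
      have : R + (W:ℝ) ≤ ρ := by rw [hR_def]; linarith
      linarith
    obtain ⟨y, hy1, hy2⟩ := iterate_steps hd R (by rw [← hs_def]; exact hRs) ξ W x hcond
    rw [← hs_def, ← hc_def] at hy2
    exact ⟨y, hy1, hy2⟩
  have hWc_ge : (1:ℝ)/(2*R) ≤ 1/(2*s) := by
    apply one_div_le_one_div_of_le (by positivity) (by linarith)
  constructor
  · -- Case W < 2s
    intro hWs x hx
    rw [← hs_def] at hWs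
    obtain ⟨hx2', hx1', y, hy1, hy2⟩ := main x hx
    have hK1 : 1 ≤ K := by
      rw [hK_def]
      apply Nat.le_floor
      rw [← hs_def, le_div_iff₀ hW0]
      push_cast
      linarith
    have hex : ∃ k, k ≤ K ∧ ρ + aCoef d W k < enorm (x - ξ) := by
      refine ⟨K, le_rfl, ?_⟩
      rw [aCoef, if_pos hK_def]
      linarith
    obtain ⟨k, hk_def⟩ : ∃ k, k = Nat.find hex := ⟨_, rfl⟩
    have hkK : k ≤ K := by rw [hk_def]; exact (Nat.find_spec hex).1
    have hk_lt : ρ + aCoef d W k < enorm (x - ξ) := by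
      rw [hk_def]; exact (Nat.find_spec hex).2
    have hmin : ∀ j, j < k → ¬(j ≤ K ∧ ρ + aCoef d W j < enorm (x - ξ)) := by
      intro j hj
      exact Nat.find_min hex (by omega)
    have hk1 : 1 ≤ k := by
      by_contra hc
      push_neg at hc
      have hk0 : k = 0 := by omega
      rw [hk0, aCoef, if_neg (by omega : (0:ℕ) ≠ kstar d W)] at hk_lt
      push_cast at hk_lt
      simp at hk_lt
      linarith
    -- previous index
    obtain ⟨k', rfl⟩ : ∃ k', k = k' + 1 := ⟨k - 1, by omega⟩
    have hk'K : k' ≤ K := by omega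
    have hprev : enorm (x - ξ) ≤ ρ + aCoef d W k' := by
      have := hmin k' (by omega)
      push_neg at this
      exact this hk'K
    have hk'ne : k' ≠ kstar d W := by omega
    have hprev_val : aCoef d W k' = 1 - (k':ℝ) * W / (2 * s) := by
      rw [aCoef, if_neg hk'ne, hs_def]
    -- show the decrement covers the gap
    have hgap : aCoef d W k' - W * c ≤ aCoef d W (k' + 1) := by
      by_cases hke : k' + 1 = kstar d W
      · -- last interval
        rw [hprev_val, aCoef, if_pos hke]
        have hKk : (k':ℝ) = (K:ℝ) - 1 := by
          have : k' + 1 = K := by omega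
          have : (k':ℝ) + 1 = (K:ℝ) := by exact_mod_cast this
          linarith
        have hWγ : (W:ℝ) * c = (W:ℝ)/s - (W:ℝ)/(2*R) := by rw [hc_def]; ring
        have hid : (W:ℝ)/s - γ = 1 - ((K:ℝ)-1) * W / (2*s) := by
          rw [hγ_def]
          field_simp
          ring
        rw [hKk]
        linarith [hRγ]
      · -- interior interval
        rw [hprev_val, aCoef, if_neg hke, ← hs_def]
        push_cast
        have hWγ : (W:ℝ) * c = (W:ℝ)/s - (W:ℝ)/(2*R) := by rw [hc_def]; ring
        have hWs2 : (W:ℝ)/(2*R) ≤ (W:ℝ)/(2*s) := by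
          apply div_le_div_of_nonneg_left (le_of_lt hW0) (by positivity) (by linarith)
        have hid : ((k':ℝ)+1) * W / (2*s) - (k':ℝ) * W / (2*s) = (W:ℝ)/(2*s) := by
          field_simp
          ring
        have hid2 : (W:ℝ)/s = 2 * ((W:ℝ)/(2*s)) := by
          field_simp
        linarith
    have hyk : enorm (y - ξ) ≤ ρ + aCoef d W (k' + 1) := by linarith
    have hpos : 0 < enorm (x - y) := by
      apply enorm_pos_of_ne
      intro h
      rw [← h] at hyk
      linarith
    exact ⟨k' + 1, hk1, hkK.trans_eq hK_def, hk_lt, y, hyk, hpos, hy1⟩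
  · -- Case 2s ≤ W
    intro hWs x hx
    rw [← hs_def] at hWs
    obtain ⟨hx2', hx1', y, hy1, hy2⟩ := main x hx
    have hWc : (1:ℝ) ≤ (W:ℝ) * c := by
      have h1 : (2:ℝ) ≤ (W:ℝ)/s := by rw [le_div_iff₀ hs0]; linarith
      have h2 : (W:ℝ)/(2*R) ≤ 1 := by rw [div_le_one (by positivity)]; linarith
      have h3 : (W:ℝ) * c = (W:ℝ)/s - (W:ℝ)/(2*R) := by rw [hc_def]; ring
      linarith
    have hyρ : enorm (y - ξ) ≤ ρ := by linarith
    have hpos : 0 < enorm (x - y) := by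
      apply enorm_pos_of_ne
      intro h
      rw [← h] at hyρ
      linarith
    exact ⟨hx2', y, hyρ, hpos, hy1⟩

end BandShell
end

section
/- Poincaré inequality with Dirichlet boundary condition (Lemma C.3, conditional form): Let Γ be a locally finite connected graph, x₀ ∈ 𝕍, R ≥ 1, and suppose B_R = B(x₀,R) is finite and nonempty. Suppose the Dirichlet Laplacian −Δ^{B_R} is invertible and that u₀ = (−Δ^{B_R})^{-1}𝟙 satisfies u₀(x) ≤ κ for all x ∈ B_R, for some κ > 0. Then for every f: 𝕍 → ℝ vanishing at every vertex outside B_R: Σ_{x∈B_R} f(x)² ≤ κ·Σ_{x∈B_R} Σ_{y: y∼x} (f(y)−f(x))². -/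
open scoped BigOperators

namespace LandscapeGraph

variable {V : Type*}

/-- Ball of real radius `r` with respect to the shortest-path graph metric. -/
def gball (G : SimpleGraph V) (x : V) (r : ℝ) : Set V :=
  {y | G.Reachable x y ∧ (G.dist x y : ℝ) ≤ r}

/-- The degree of a vertex, as a real number. -/
noncomputable def ndeg (G : SimpleGraph V) (x : V) : ℝ := ((G.neighborSet x).ncard : ℝ)

/-- The graph Laplacian `Δf(x) = Σ_{y∼x} (f(y) - f(x))`. -/
noncomputable def lap (G : SimpleGraph V) (f : V → ℝ) (x : V) : ℝ :=
  ∑ᶠ y ∈ G.neighborSet x, (f y - f x)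

/-- Volume control (Ahlfors `α`-regularity) with parameters `(α, cL, cU)`. -/
def VolCtrl (G : SimpleGraph V) (α cL cU : ℝ) : Prop :=
  ∀ x : V, ∀ r : ℝ, 1 ≤ r →
    cL * r ^ α ≤ ((gball G x r).ncard : ℝ) ∧ ((gball G x r).ncard : ℝ) ≤ cU * r ^ α

/-- Degree-weighted average of `f` over a set `S`. -/
noncomputable def wavg (G : SimpleGraph V) (S : Set V) (f : V → ℝ) : ℝ :=
  (∑ᶠ z ∈ S, f z * ndeg G z) / ∑ᶠ z ∈ S, ndeg G z

/-- The Dirichlet-type energy `Σ_{z,w∈S, z∼w} (f z - f w)²` (over ordered pairs). -/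
noncomputable def pairEnergy (G : SimpleGraph V) (S : Set V) (f : V → ℝ) : ℝ :=
  ∑ᶠ z ∈ S, ∑ᶠ w ∈ {w ∈ S | G.Adj z w}, (f z - f w) ^ 2

/-- The weak Poincaré inequality with constants `(CP, lam)`. -/
def WeakPI (G : SimpleGraph V) (CP lam : ℝ) : Prop :=
  ∀ x : V, ∀ r : ℝ, 1 ≤ r → ∀ f : V → ℝ,
    (∑ᶠ z ∈ gball G x r, (f z - wavg G (gball G x r) f) ^ 2) ≤
      CP * r ^ 2 * pairEnergy G (gball G x (lam * r)) f

/-- The Dirichlet restriction `H^A` of the Jacobi operator, acting on functions. -/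
noncomputable def HAop (G : SimpleGraph V) (μ : V → V → ℝ) (Vpot : V → ℝ) (A : Set V)
    (f : V → ℝ) (x : V) : ℝ :=
  ndeg G x * f x - (∑ᶠ y ∈ {y ∈ A | G.Adj x y}, μ x y * f y) + Vpot x * f x

/-- Symmetric bond weights with values in `[0,1]`. -/
def BondWeights (G : SimpleGraph V) (μ : V → V → ℝ) : Prop :=
  ∀ x y, G.Adj x y → μ x y = μ y x ∧ 0 ≤ μ x y ∧ μ x y ≤ 1

/-- `u` is the landscape function of `H^A`: positive on `A` and solving `H^A u = 1` on `A`. -/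
def IsLandscape (G : SimpleGraph V) (μ : V → V → ℝ) (Vpot : V → ℝ) (A : Finset V)
    (u : V → ℝ) : Prop :=
  (∀ x ∈ A, 0 < u x) ∧ ∀ x ∈ A, HAop G μ Vpot (↑A) u x = 1

open Classical in
/-- The Dirichlet restriction `H^A` as a matrix indexed by `A`. -/
noncomputable def HAmat (G : SimpleGraph V) (μ : V → V → ℝ) (Vpot : V → ℝ) (A : Finset V) :
    Matrix A A ℝ := fun x y =>
  (if (x : V) = (y : V) then ndeg G (x : V) + Vpot (x : V) else 0) -
    (if G.Adj (x : V) (y : V) then μ (x : V) (y : V) else 0)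

open Classical in
/-- The integrated density of states: number of eigenvalues `≤ E` (with multiplicity),
divided by `|A|`. -/
noncomputable def NA {A : Finset V} {M : Matrix A A ℝ} (hM : M.IsHermitian) (E : ℝ) : ℝ :=
  ((Finset.univ.filter fun i => hM.eigenvalues i ≤ E).card : ℝ) / (A.card : ℝ)

/-- `Z` is the set of centers of a covering of `𝕍` by balls of radius `R`
with finite overlap constant `b`. -/
def IsCover (G : SimpleGraph V) (Z : Set V) (R b : ℝ) : Prop :=
  (∀ y : V, ∃ z ∈ Z, y ∈ gball G z R) ∧
    ∀ y : V, (({z ∈ Z | y ∈ gball G z R}).ncard : ℝ) ≤ b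

/-- The landscape counting function `N_u^{𝒫,A}(E)` for the cover with centers `Z` and radius `R`:
the number of balls `B` of the cover with `min_{x ∈ B∩A} 1/u(x) ≤ E`, divided by `|A|`. -/
noncomputable def Nu (G : SimpleGraph V) (u : V → ℝ) (A : Finset V) (Z : Set V) (R E : ℝ) : ℝ :=
  (({z ∈ Z | ∃ x ∈ A, x ∈ gball G z R ∧ 1 / u x ≤ E}).ncard : ℝ) / (A.card : ℝ)

/-- The diameter of a finite set of vertices in the graph metric. -/
noncomputable def diamA (G : SimpleGraph V) (A : Finset V) : ℝ :=
  ((A.sup fun x => A.sup fun y => G.dist x y : ℕ) : ℝ)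

/-- `A` has sufficient overlap with balls, with constant `cA`. -/
def SuffOverlap (G : SimpleGraph V) (A : Finset V) (α cA : ℝ) : Prop :=
  ∀ x ∈ A, ∀ r : ℝ, 1 ≤ r → r ≤ 4 * diamA G A →
    cA * r ^ α ≤ (((↑A : Set V) ∩ gball G x r).ncard : ℝ)

/-- The Dirichlet Laplacian `-Δ^B` of a region `B`, acting on functions:
`(-Δ^B f)(x) = deg(x) f(x) - Σ_{y ∈ B, y ∼ x} f(y)`. -/
noncomputable def negDirLap (G : SimpleGraph V) (B : Set V) (f : V → ℝ) (x : V) : ℝ :=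
  ndeg G x * f x - ∑ᶠ y ∈ {y ∈ B | G.Adj x y}, f y

/-- Exterior (vertex) boundary of a set. -/
def extBoundary (G : SimpleGraph V) (S : Set V) : Set V :=
  {x | x ∉ S ∧ ∃ y ∈ S, G.Adj x y}

/-- Ball with respect to an abstract metric `d`. -/
def dball (d : V → V → ℝ) (ξ : V) (R : ℝ) : Set V := {y | d ξ y ≤ R}

/-- The harmonic weight assumption: a metric `d` strongly equivalent (constant `c`) to the
graph metric, together with harmonic weights `h ξ R : B^d(ξ,R) → [0,1]` satisfying the
submean property for subharmonic functions (with equality for harmonic ones), and a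
uniform lower bound `c' / |B^d(ξ,R)|` off `bad' sets `X ξ R` of asymptotically
negligible proportion. -/
structure HarmonicWeight (G : SimpleGraph V) (d : V → V → ℝ) (h : V → ℝ → V → ℝ)
    (X : V → ℝ → Set V) (c c' : ℝ) : Prop where
  c_one : 1 ≤ c
  c'_pos : 0 < c'
  d_self : ∀ x, d x x = 0
  d_eq_zero : ∀ x y, d x y = 0 → x = y
  d_symm : ∀ x y, d x y = d y x
  d_triangle : ∀ x y z, d x z ≤ d x y + d y z
  d_lower : ∀ x y, c⁻¹ * (G.dist x y : ℝ) ≤ d x y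
  d_upper : ∀ x y, d x y ≤ c * (G.dist x y : ℝ)
  h_mem : ∀ ξ (R : ℝ) y, y ∈ dball d ξ R → h ξ R y ∈ Set.Icc (0 : ℝ) 1
  submean : ∀ ξ (R : ℝ), 0 < R → ∀ f : V → ℝ,
    (∀ x ∈ dball d ξ R ∪ extBoundary G (dball d ξ R), 0 ≤ lap G f x) →
    f ξ ≤ ∑ᶠ y ∈ dball d ξ R, h ξ R y * f y
  harm_eq : ∀ ξ (R : ℝ), 0 < R → ∀ f : V → ℝ,
    (∀ x ∈ dball d ξ R ∪ extBoundary G (dball d ξ R), lap G f x = 0) →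
    f ξ = ∑ᶠ y ∈ dball d ξ R, h ξ R y * f y
  X_subset : ∀ ξ (R : ℝ), X ξ R ⊆ dball d ξ R
  h_lower : ∀ ξ (R : ℝ), ∀ y ∈ dball d ξ R \ X ξ R,
    c' / ((dball d ξ R).ncard : ℝ) ≤ h ξ R y
  X_small : ∀ ε : ℝ, 0 < ε → ∃ R₀ : ℝ, ∀ R : ℝ, R₀ ≤ R → ∀ ξ : V,
    ((X ξ R).ncard : ℝ) ≤ ε * ((dball d ξ R).ncard : ℝ)



/-- **Poincaré inequality with Dirichlet boundary condition** (Lemma C.3, conditional form).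
If the Dirichlet Laplacian of the finite ball `B_R = B(x₀,R)` is invertible (trivial kernel)
and its landscape `u₀ = (-Δ^{B_R})⁻¹𝟙` is bounded by `κ` on `B_R`, then every `f` vanishing
outside `B_R` satisfies `Σ_{B_R} f² ≤ κ Σ_{x∈B_R} Σ_{y∼x} (f(y)-f(x))²`. -/
theorem dirichlet_poincare
    {V : Type*}
    (G : SimpleGraph V) (hconn : G.Connected) (hlf : ∀ x : V, (G.neighborSet x).Finite)
    (x₀ : V) (R : ℝ) (hR : 1 ≤ R)
    (hfin : (gball G x₀ R).Finite) (hne : (gball G x₀ R).Nonempty)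
    (κ : ℝ) (hκ : 0 < κ)
    (hker : ∀ w : V → ℝ,
      (∀ x ∈ gball G x₀ R, negDirLap G (gball G x₀ R) w x = 0) →
      ∀ x ∈ gball G x₀ R, w x = 0)
    (u₀ : V → ℝ)
    (hu₀ : ∀ x ∈ gball G x₀ R, negDirLap G (gball G x₀ R) u₀ x = 1)
    (hbd : ∀ x ∈ gball G x₀ R, u₀ x ≤ κ) :
    ∀ f : V → ℝ, (∀ x, x ∉ gball G x₀ R → f x = 0) →
      (∑ᶠ x ∈ gball G x₀ R, f x ^ 2) ≤
        κ * ∑ᶠ x ∈ gball G x₀ R, ∑ᶠ y ∈ G.neighborSet x, (f y - f x) ^ 2 := by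
  classical
  intro f hf
  set S : Finset V := hfin.toFinset with hSdef
  set N : V → Finset V := fun x => (hlf x).toFinset with hNdef
  have hmemS : ∀ z, z ∈ S ↔ z ∈ gball G x₀ R := fun z => hfin.mem_toFinset
  have hmemN : ∀ x y, y ∈ N x ↔ G.Adj x y := by
    intro x y
    simp [hNdef, Set.Finite.mem_toFinset, SimpleGraph.mem_neighborSet]
  have hdeg : ∀ x, ndeg G x = ((N x).card : ℝ) := by
    intro x
    rw [ndeg, Set.ncard_eq_toFinset_card _ (hlf x)]
  -- the landscape equation in Finset form
  have heq : ∀ x ∈ S, ((N x).card : ℝ) * u₀ x - ∑ y ∈ N x ∩ S, u₀ y = 1 := by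
    intro x hx
    have h1 := hu₀ x ((hmemS x).1 hx)
    rw [negDirLap, hdeg] at h1
    have hset : {y ∈ gball G x₀ R | G.Adj x y} = ↑(N x ∩ S) := by
      ext y
      simp only [Set.mem_setOf_eq, Finset.coe_inter, Set.mem_inter_iff, Finset.mem_coe,
        hmemN, hmemS]
      tauto
    rw [hset, finsum_mem_coe_finset] at h1
    exact h1
  have hSne : S.Nonempty := by
    obtain ⟨x, hx⟩ := hne
    exact ⟨x, (hmemS x).2 hx⟩
  -- positivity of the landscape
  have hupos : ∀ x ∈ S, 0 < u₀ x := by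
    obtain ⟨m, hmS, hmin⟩ := S.exists_min_image u₀ hSne
    intro x hx
    by_contra hle
    push_neg at hle
    have hm0 : u₀ m ≤ 0 := le_trans (hmin x hx) hle
    have h1 := heq m hmS
    have hsum : ((N m ∩ S).card : ℝ) * u₀ m ≤ ∑ y ∈ N m ∩ S, u₀ y := by
      have := Finset.sum_le_sum (f := fun _ => u₀ m) (g := u₀)
        (s := N m ∩ S) (fun y hy => hmin y (Finset.mem_of_mem_inter_right hy))
      rwa [Finset.sum_const, nsmul_eq_mul] at this
    have hcard : ((N m ∩ S).card : ℝ) ≤ ((N m).card : ℝ) := by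
      exact_mod_cast Finset.card_le_card Finset.inter_subset_left
    nlinarith [mul_nonneg (sub_nonneg.2 hcard) (neg_nonneg.2 hm0)]
  -- auxiliary functions
  set ut : V → ℝ := fun x => if x ∈ S then u₀ x else 0 with hutdef
  set g : V → ℝ := fun x => if x ∈ S then f x / u₀ x else 0 with hgdef
  set w : V → ℝ := fun x => g x ^ 2 * ut x with hwdef
  have hut_nonneg : ∀ x, 0 ≤ ut x := by
    intro x
    by_cases hx : x ∈ S
    · simp only [hutdef, if_pos hx]; exact (hupos x hx).le
    · simp only [hutdef, if_neg hx]; exact le_rfl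
  have hfgu : ∀ x, f x = g x * ut x := by
    intro x
    by_cases hx : x ∈ S
    · simp only [hgdef, hutdef, if_pos hx]
      field_simp [(hupos x hx).ne']
    · simp only [hgdef, hutdef, if_neg hx, zero_mul]
      exact hf x (fun h => hx ((hmemS x).2 h))
  have hw0 : ∀ x, x ∉ S → w x = 0 := by
    intro x hx
    simp only [hwdef, hutdef, if_neg hx, mul_zero]
  have hw_nonneg : ∀ x, 0 ≤ w x := fun x =>
    mul_nonneg (sq_nonneg _) (hut_nonneg x)
  -- the enlarged finset
  set T : Finset V := S ∪ S.biUnion N with hTdef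
  have hST : S ⊆ T := Finset.subset_union_left
  have hNT : ∀ x ∈ S, N x ⊆ T := by
    intro x hx y hy
    exact Finset.mem_union_right _ (Finset.mem_biUnion.2 ⟨x, hx, hy⟩)
  set F : V → V → ℝ := fun x y => w x * (ut x - ut y) with hFdef
  set Esum : ℝ := ∑ x ∈ S, ∑ y ∈ N x, (f y - f x) ^ 2 with hEdef
  have hE_nonneg : ∀ (x y : V), 0 ≤ (f y - f x) ^ 2 := fun _ _ => sq_nonneg _
  -- step (2): ∑ w = ∑∑ F over S × N x
  have hstep2 : ∑ x ∈ S, w x = ∑ x ∈ S, ∑ y ∈ N x, F x y := by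
    refine Finset.sum_congr rfl fun x hx => ?_
    have h1 : ∑ y ∈ N x, ut y = ∑ y ∈ N x ∩ S, u₀ y := by
      simp only [hutdef]
      exact Finset.sum_ite_mem _ _ _
    calc w x = w x * (((N x).card : ℝ) * u₀ x - ∑ y ∈ N x ∩ S, u₀ y) := by
          rw [heq x hx, mul_one]
      _ = ∑ y ∈ N x, F x y := by
          simp only [hFdef, ← Finset.mul_sum]
          rw [Finset.sum_sub_distrib, Finset.sum_const, nsmul_eq_mul, h1]
          simp only [hutdef, if_pos hx]
  -- step (3): extend to T
  have hstep3 : ∑ x ∈ S, ∑ y ∈ N x, F x y = ∑ x ∈ T, ∑ y ∈ N x ∩ T, F x y := by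
    have h1 : ∑ x ∈ S, ∑ y ∈ N x, F x y = ∑ x ∈ S, ∑ y ∈ N x ∩ T, F x y := by
      refine Finset.sum_congr rfl fun x hx => ?_
      rw [Finset.inter_eq_left.2 (hNT x hx)]
    rw [h1]
    refine Finset.sum_subset hST fun x _ hxS => ?_
    refine Finset.sum_eq_zero fun y _ => ?_
    simp only [hFdef, hw0 x hxS, zero_mul]
  set A : ℝ := ∑ x ∈ T, ∑ y ∈ N x ∩ T, F x y with hAdef
  -- step (4): symmetrize
  have hswap : ∑ x ∈ T, ∑ y ∈ N x ∩ T, F y x = A := by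
    rw [hAdef]
    exact Finset.sum_comm' (fun x y => by
      simp only [Finset.mem_inter, hmemN]
      constructor
      · rintro ⟨hxT, hxy, hyT⟩; exact ⟨⟨hxy.symm, hxT⟩, hyT⟩
      · rintro ⟨⟨hyx, hxT⟩, hyT⟩; exact ⟨hxT, hyx.symm, hyT⟩)
  have h2A : 2 * A = ∑ x ∈ T, ∑ y ∈ N x ∩ T, (F x y + F y x) := by
    have hsum : A + A = (∑ x ∈ T, ∑ y ∈ N x ∩ T, F x y)
        + ∑ x ∈ T, ∑ y ∈ N x ∩ T, F y x := by rw [hswap, ← hAdef]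
    rw [two_mul, hsum, ← Finset.sum_add_distrib]
    exact Finset.sum_congr rfl fun x _ => by rw [← Finset.sum_add_distrib]
  -- pointwise edge inequality
  have hpt : ∀ x y, F x y + F y x ≤ (f x - f y) ^ 2 := by
    intro x y
    have ha := hut_nonneg x
    have hb := hut_nonneg y
    rw [hfgu x, hfgu y]
    simp only [hFdef, hwdef]
    nlinarith [mul_nonneg (mul_nonneg ha hb) (sq_nonneg (g x - g y))]
  set Ework : ℝ := ∑ x ∈ T, ∑ y ∈ N x ∩ T, (f x - f y) ^ 2 with hWdef
  have h2A_le : 2 * A ≤ Ework := by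
    rw [h2A, hWdef]
    exact Finset.sum_le_sum fun x _ => Finset.sum_le_sum fun y _ => hpt x y
  -- step (7): Ework ≤ 2 * Esum
  have hwork : Ework ≤ 2 * Esum := by
    have hsplit : Ework = (∑ x ∈ S, ∑ y ∈ N x ∩ T, (f x - f y) ^ 2)
        + ∑ x ∈ T \ S, ∑ y ∈ N x ∩ T, (f x - f y) ^ 2 := by
      rw [hWdef, ← Finset.sum_sdiff hST, add_comm]
    have hpart1 : ∑ x ∈ S, ∑ y ∈ N x ∩ T, (f x - f y) ^ 2 ≤ Esum := by
      rw [hEdef]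
      refine Finset.sum_le_sum fun x hx => ?_
      refine le_of_le_of_eq (Finset.sum_le_sum_of_subset_of_nonneg
        Finset.inter_subset_left (fun y _ _ => sq_nonneg _)) ?_
      exact Finset.sum_congr rfl fun y _ => by ring
    have hpart2 : ∑ x ∈ T \ S, ∑ y ∈ N x ∩ T, (f x - f y) ^ 2 ≤ Esum := by
      have hz : ∑ x ∈ T \ S, ∑ y ∈ N x ∩ T, (f x - f y) ^ 2
          = ∑ x ∈ T \ S, ∑ y ∈ (N x ∩ T) ∩ S, (f x - f y) ^ 2 := by
        refine Finset.sum_congr rfl fun x hx => ?_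
        refine (Finset.sum_subset Finset.inter_subset_left fun y hy hyS => ?_).symm
        have hyS' : y ∉ S := fun h => hyS (Finset.mem_inter.2 ⟨hy, h⟩)
        have hxS : x ∉ S := (Finset.mem_sdiff.1 hx).2
        rw [hf x (fun h => hxS ((hmemS x).2 h)), hf y (fun h => hyS' ((hmemS y).2 h))]
        ring
      rw [hz]
      have hcomm : ∑ x ∈ T \ S, ∑ y ∈ (N x ∩ T) ∩ S, (f x - f y) ^ 2
          = ∑ y ∈ S, ∑ x ∈ (N y ∩ T) \ S, (f x - f y) ^ 2 := by
        exact Finset.sum_comm' (fun x y => by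
          simp only [Finset.mem_sdiff, Finset.mem_inter, hmemN]
          constructor
          · rintro ⟨⟨hxT, hxS⟩, ⟨hyx, hyT⟩, hyS⟩
            exact ⟨⟨⟨hyx.symm, hxT⟩, hxS⟩, hyS⟩
          · rintro ⟨⟨⟨hxy, hxT⟩, hxS⟩, hyS⟩
            exact ⟨⟨hxT, hxS⟩, ⟨hxy.symm, hST hyS⟩, hyS⟩)
      rw [hcomm, hEdef]
      refine Finset.sum_le_sum fun y hy => ?_
      refine le_trans (Finset.sum_le_sum_of_subset_of_nonneg
        (Finset.sdiff_subset.trans Finset.inter_subset_left)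
        (fun x _ _ => sq_nonneg _)) ?_
      exact le_of_eq (Finset.sum_congr rfl fun x _ => by ring)
    linarith [hsplit, hpart1, hpart2]
  have hA_le : A ≤ Esum := by linarith
  -- step (1): ∑ f² ≤ κ ∑ w
  have hstep1 : ∑ x ∈ S, f x ^ 2 ≤ κ * ∑ x ∈ S, w x := by
    rw [Finset.mul_sum]
    refine Finset.sum_le_sum fun x hx => ?_
    have hux := hupos x hx
    have h1 : f x ^ 2 = w x * u₀ x := by
      simp only [hwdef, hgdef, hutdef, if_pos hx]
      field_simp [(hupos x hx).ne']
    rw [h1]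
    calc w x * u₀ x ≤ w x * κ := by
          exact mul_le_mul_of_nonneg_left (hbd x ((hmemS x).1 hx)) (hw_nonneg x)
      _ = κ * w x := mul_comm _ _
  -- convert finsum goal to Finset sums
  have hLHS : ∑ᶠ x ∈ gball G x₀ R, f x ^ 2 = ∑ x ∈ S, f x ^ 2 := by
    rw [← hfin.coe_toFinset, finsum_mem_coe_finset]
  have hRHS : ∑ᶠ x ∈ gball G x₀ R, ∑ᶠ y ∈ G.neighborSet x, (f y - f x) ^ 2 = Esum := by
    rw [← hfin.coe_toFinset, finsum_mem_coe_finset, hEdef]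
    refine Finset.sum_congr rfl fun x _ => ?_
    rw [← (hlf x).coe_toFinset, finsum_mem_coe_finset]
  rw [hLHS, hRHS]
  calc ∑ x ∈ S, f x ^ 2 ≤ κ * ∑ x ∈ S, w x := hstep1
    _ = κ * A := by rw [hstep2, hstep3]
    _ ≤ κ * Esum := mul_le_mul_of_nonneg_left hA_le hκ.le

end LandscapeGraph
end
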